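/- Let K be an algebraically closed field, n a positive integer, G a group, and H a normal subgroup of G of finite index. Let ρ, ρ' : G → GL(n, K) be matrix representations such that the restriction of ρ to H is irreducible (the only K-subspaces W of K^n with ρ(h) · W ⊆ W for all h ∈ H are 0 and K^n), and suppose there exists T ∈ GL(n, K) with T * ρ(h) = ρ'(h) * T for all h ∈ H. Then there exists a character φ : G → Kˣ that is trivial on H (and hence satisfies φ(g)^{[G:H]} = 1 for all g ∈ G) such that T * ρ(g) * T⁻¹ = φ(g) • ρ'(g) for every g ∈ G. -/

import Mathlib

open Matrix

/-- If two representations `ρ, ρ' : G → GL(n, K)` over an algebraically closed field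
become isomorphic (via `T`) on a normal subgroup `H` of finite index on which `ρ` is
irreducible, then they differ by a character `φ : G → Kˣ` trivial on `H` (hence with
`φ(g)^[G:H] = 1`): `T * ρ(g) * T⁻¹ = φ(g) • ρ'(g)` for all `g`. -/
theorem conjugate_on_finite_index_subgroup_iff_twist (K : Type*) [Field K] [IsAlgClosed K]
    (n : ℕ) (hn : 0 < n) (G : Type*) [Group G]
    (H : Subgroup G) [H.Normal] [H.FiniteIndex]
    (ρ ρ' : G →* GL (Fin n) K)
    (hirr : ∀ W : Submodule K (Fin n → K),
      (∀ h ∈ H, ∀ v ∈ W, (ρ h : Matrix (Fin n) (Fin n) K) *ᵥ v ∈ W) → W = ⊥ ∨ W = ⊤)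
    (T : GL (Fin n) K)
    (hT : ∀ h ∈ H, T * ρ h = ρ' h * T) :
    ∃ φ : G →* Kˣ,
      (∀ h ∈ H, φ h = 1) ∧
      (∀ g : G, φ g ^ H.index = 1) ∧
      (∀ g : G, ((T * ρ g * T⁻¹ : GL (Fin n) K) : Matrix (Fin n) (Fin n) K)
        = (φ g : K) • (ρ' g : Matrix (Fin n) (Fin n) K)) := by
  haveI : Nonempty (Fin n) := ⟨⟨0, hn⟩⟩
  -- uniqueness of the scalar
  have huniq : ∀ (g : G) (d e : K),
      d • (ρ' g : Matrix (Fin n) (Fin n) K) = e • (ρ' g : Matrix (Fin n) (Fin n) K) → d = e := by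
    intro g d e hde
    have hne : ((ρ' g : GL (Fin n) K) : Matrix (Fin n) (Fin n) K) ≠ 0 := by
      intro h0
      have h1 : ((ρ' g : GL (Fin n) K) : Matrix (Fin n) (Fin n) K)
          * (((ρ' g)⁻¹ : GL (Fin n) K) : Matrix (Fin n) (Fin n) K) = 1 := (ρ' g).mul_inv
      rw [h0, zero_mul] at h1
      exact one_ne_zero h1.symm
    have h2 : (d - e) • ((ρ' g : GL (Fin n) K) : Matrix (Fin n) (Fin n) K) = 0 := by
      rw [sub_smul, hde, sub_self]
    rcases smul_eq_zero.mp h2 with h | h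
    · exact sub_eq_zero.mp h
    · exact absurd h hne
  -- the key Schur-type step
  have key : ∀ g : G, ∃ c : K, c ≠ 0 ∧
      ((T * ρ g * T⁻¹ : GL (Fin n) K) : Matrix (Fin n) (Fin n) K)
        = c • (ρ' g : Matrix (Fin n) (Fin n) K) := by
    intro g
    set u : GL (Fin n) K := T⁻¹ * (ρ' g)⁻¹ * T * ρ g with hu
    have hcomm : ∀ h ∈ H, u * ρ h = ρ h * u := by
      intro h hh
      obtain ⟨x, hx⟩ : ∃ x : G, x = g * h * g⁻¹ := ⟨_, rfl⟩
      have hX : x ∈ H := hx ▸ Subgroup.Normal.conj_mem ‹H.Normal› h hh g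
      have e1 : T * ρ x = ρ' x * T := hT _ hX
      have e2 : T * ρ h = ρ' h * T := hT h hh
      have e2' : T⁻¹ * ρ' h = ρ h * T⁻¹ := by
        rw [inv_mul_eq_iff_eq_mul, ← mul_assoc, e2, mul_inv_cancel_right]
      have a1 : ρ g * ρ h = ρ x * ρ g := by
        rw [← _root_.map_mul, ← _root_.map_mul]; congr 1; rw [hx]; group
      have a2 : (ρ' g)⁻¹ * ρ' x = ρ' h * (ρ' g)⁻¹ := by
        rw [← MonoidHom.map_inv, ← _root_.map_mul, ← _root_.map_mul]
        congr 1; rw [hx]; group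
      rw [hu]
      simp only [mul_assoc]
      rw [a1, ← mul_assoc T (ρ x) (ρ g), e1]
      simp only [mul_assoc]
      rw [← mul_assoc ((ρ' g)⁻¹) (ρ' x) _, a2]
      simp only [mul_assoc]
      rw [← mul_assoc T⁻¹ (ρ' h) _, e2']
      simp only [mul_assoc]
    set B : Matrix (Fin n) (Fin n) K := (u : Matrix (Fin n) (Fin n) K) with hB
    have hBcomm : ∀ h ∈ H, B * (ρ h : Matrix (Fin n) (Fin n) K)
        = (ρ h : Matrix (Fin n) (Fin n) K) * B := by
      intro h hh
      have := congrArg (fun x : GL (Fin n) K => (x : Matrix (Fin n) (Fin n) K)) (hcomm h hh)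
      simpa using this
    obtain ⟨c, hc⟩ := Module.End.exists_eigenvalue B.mulVecLin
    have hinv : ∀ h ∈ H, ∀ v ∈ Module.End.eigenspace B.mulVecLin c,
        (ρ h : Matrix (Fin n) (Fin n) K) *ᵥ v ∈ Module.End.eigenspace B.mulVecLin c := by
      intro h hh v hv
      rw [Module.End.mem_eigenspace_iff, Matrix.mulVecLin_apply] at hv ⊢
      calc B *ᵥ ((ρ h : Matrix (Fin n) (Fin n) K) *ᵥ v)
          = (B * (ρ h : Matrix (Fin n) (Fin n) K)) *ᵥ v := Matrix.mulVec_mulVec _ _ _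
        _ = ((ρ h : Matrix (Fin n) (Fin n) K) * B) *ᵥ v := by rw [hBcomm h hh]
        _ = (ρ h : Matrix (Fin n) (Fin n) K) *ᵥ (B *ᵥ v) := (Matrix.mulVec_mulVec _ _ _).symm
        _ = (ρ h : Matrix (Fin n) (Fin n) K) *ᵥ (c • v) := by rw [hv]
        _ = c • ((ρ h : Matrix (Fin n) (Fin n) K) *ᵥ v) := Matrix.mulVec_smul _ _ _
    rcases hirr _ hinv with hbot | htop
    · exact absurd hbot hc
    have hall : ∀ v : Fin n → K, B *ᵥ v = c • v := by
      intro v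
      have : v ∈ Module.End.eigenspace B.mulVecLin c := htop.symm ▸ Submodule.mem_top
      simpa [Matrix.mulVecLin_apply] using Module.End.mem_eigenspace_iff.mp this
    have hBc : B = c • (1 : Matrix (Fin n) (Fin n) K) := by
      ext i j
      have := congrFun (hall (Pi.single j 1)) i
      simp [Matrix.mulVec_single, Matrix.one_apply, Pi.single_apply] at this ⊢
      simpa [eq_comm] using this
    have hc0 : c ≠ 0 := by
      intro c0
      have h1 : B * ((u⁻¹ : GL (Fin n) K) : Matrix (Fin n) (Fin n) K) = 1 := u.mul_inv
      rw [hBc, c0, zero_smul, zero_mul] at h1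
      exact one_ne_zero h1.symm
    refine ⟨c, hc0, ?_⟩
    have hgl : T * ρ g * T⁻¹ = ρ' g * (T * (u * T⁻¹)) := by rw [hu]; group
    calc ((T * ρ g * T⁻¹ : GL (Fin n) K) : Matrix (Fin n) (Fin n) K)
        = (ρ' g : Matrix (Fin n) (Fin n) K)
            * ((T : Matrix (Fin n) (Fin n) K)
              * (B * ((T⁻¹ : GL (Fin n) K) : Matrix (Fin n) (Fin n) K))) := by
          rw [hgl]; simp [Units.val_mul, hB]
      _ = c • (ρ' g : Matrix (Fin n) (Fin n) K) := by
          rw [hBc]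
          simp [smul_mul_assoc, mul_smul_comm, ← Units.val_mul]
  choose c hc0 hc using key
  have hcu : ∀ (g : G) (d : K),
      ((T * ρ g * T⁻¹ : GL (Fin n) K) : Matrix (Fin n) (Fin n) K)
        = d • (ρ' g : Matrix (Fin n) (Fin n) K) → d = c g := by
    intro g d hd
    exact huniq g d (c g) (hd ▸ hc g)
  have hmul : ∀ a b : G, c (a * b) = c a * c b := by
    intro a b
    have h1 : ((T * ρ (a * b) * T⁻¹ : GL (Fin n) K) : Matrix (Fin n) (Fin n) K)
        = (c a * c b) • (ρ' (a * b) : Matrix (Fin n) (Fin n) K) := by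
      have : (T * ρ (a * b) * T⁻¹ : GL (Fin n) K)
          = (T * ρ a * T⁻¹) * (T * ρ b * T⁻¹) := by rw [_root_.map_mul]; group
      rw [this, Units.val_mul, hc a, hc b, _root_.map_mul ρ' a b, Units.val_mul,
        smul_mul_assoc, mul_smul_comm, smul_smul]
    exact (hcu _ _ h1).symm
  have hone : c 1 = 1 := by
    symm
    apply hcu 1
    simp
  have hH1 : ∀ h ∈ H, c h = 1 := by
    intro h hh
    symm
    apply hcu h
    rw [one_smul]
    congr 1
    rw [hT h hh]; group
  refine ⟨{ toFun := fun g => Units.mk0 (c g) (hc0 g),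
            map_one' := by ext; simpa using hone,
            map_mul' := by intro a b; ext; simpa using hmul a b }, ?_, ?_, ?_⟩
  · intro h hh
    ext
    simpa using hH1 h hh
  · intro g
    have hpow : ∀ (k : ℕ) (a : G), c (a ^ k) = c a ^ k := by
      intro k
      induction k with
      | zero => intro a; simpa using hone
      | succ m ih => intro a; rw [pow_succ, pow_succ, hmul, ih]
    have h1 : c (g ^ H.index) = 1 := hH1 _ (Subgroup.pow_index_mem H g)
    rw [hpow] at h1
    ext
    simpa using h1
  · intro g
    exact hc g
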